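/- Let F : Θ → ℝ be a functional, Q_0 and Q_1 priors on Θ, and for each θ let P_θ be a probability distribution of the data. Define p_i = ∫ P_θ dQ_i(θ) for the mixture distribution of the data, Δ = |E_{Q_0}F − E_{Q_1}F|, and δ_i = E_{Q_i}|F(θ) − E_{Q_i}F|. Then for every estimator T̂ (a measurable function of the data), sup_{θ∈Θ} E_{P_θ}|T̂ − F(θ)| ≥ (Δ/4)·(1 − TV(p_0, p_1)) − (δ_0 + δ_1)/2. -/

import Mathlib

open MeasureTheory

/-- Total variation distance between two measures, as the supremum over measurable sets. -/
noncomputable def tvDist {α : Type*} [MeasurableSpace α] (p q : Measure α) : ℝ :=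
  ⨆ s : {s : Set α // MeasurableSet s}, |(p s).toReal - (q s).toReal|

theorem le_cam_composite {Θ 𝒳 : Type*} [MeasurableSpace Θ] [MeasurableSpace 𝒳]
    (P : Θ → Measure 𝒳) (hP : Measurable P) (hPprob : ∀ θ, IsProbabilityMeasure (P θ))
    (Q₀ Q₁ : Measure Θ) [IsProbabilityMeasure Q₀] [IsProbabilityMeasure Q₁]
    (F : Θ → ℝ) (hFmeas : Measurable F) (hF₀ : Integrable F Q₀) (hF₁ : Integrable F Q₁)
    (T : 𝒳 → ℝ) (hT : Measurable T) :
    ENNReal.ofReal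
        ((|∫ θ, F θ ∂Q₀ - ∫ θ, F θ ∂Q₁| / 4) * (1 - tvDist (Q₀.bind P) (Q₁.bind P))
          - ((∫ θ, |F θ - ∫ θ', F θ' ∂Q₀| ∂Q₀) + ∫ θ, |F θ - ∫ θ', F θ' ∂Q₁| ∂Q₁) / 2)
      ≤ ⨆ θ : Θ, ∫⁻ x, ENNReal.ofReal |T x - F θ| ∂(P θ) := by
  classical
  set m₀ := ∫ θ, F θ ∂Q₀ with hm₀def
  set m₁ := ∫ θ, F θ ∂Q₁ with hm₁def
  set δ₀ := ∫ θ, |F θ - m₀| ∂Q₀ with hδ₀def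
  set δ₁ := ∫ θ, |F θ - m₁| ∂Q₁ with hδ₁def
  set p₀ := Q₀.bind P with hp₀def
  set p₁ := Q₁.bind P with hp₁def
  set tv := tvDist p₀ p₁ with htvdef
  set S := ⨆ θ : Θ, ∫⁻ x, ENNReal.ofReal |T x - F θ| ∂(P θ) with hSdef
  set Δ := |m₀ - m₁| with hΔdef
  set L := (Δ / 4) * (1 - tv) - (δ₀ + δ₁) / 2 with hLdef
  show ENNReal.ofReal L ≤ S
  have hδ₀nn : 0 ≤ δ₀ := integral_nonneg fun θ => abs_nonneg _
  have hδ₁nn : 0 ≤ δ₁ := integral_nonneg fun θ => abs_nonneg _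
  have hΔnn : 0 ≤ Δ := abs_nonneg _
  by_cases hL : L ≤ 0
  · calc ENNReal.ofReal L = 0 := ENNReal.ofReal_eq_zero.2 hL
      _ ≤ S := zero_le
  push_neg at hL
  have h1tv : 0 < 1 - tv := by
    by_contra h
    push_neg at h
    have : (Δ / 4) * (1 - tv) ≤ 0 :=
      mul_nonpos_of_nonneg_of_nonpos (by linarith) h
    simp only [hLdef] at hL
    linarith
  -- mixtures are probability measures
  have hbindprob : ∀ (Q : Measure Θ) [IsProbabilityMeasure Q],
      IsProbabilityMeasure (Q.bind P) := by
    intro Q hQ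
    constructor
    rw [Measure.bind_apply MeasurableSet.univ hP.aemeasurable]
    simp [measure_univ]
  have hp₀prob : IsProbabilityMeasure p₀ := hbindprob Q₀
  have hp₁prob : IsProbabilityMeasure p₁ := hbindprob Q₁
  -- upper bound step
  have key : ∀ (Q : Measure Θ) [IsProbabilityMeasure Q] (m : ℝ), Integrable F Q →
      ∫⁻ x, ENNReal.ofReal |T x - m| ∂(Q.bind P)
        ≤ S + ENNReal.ofReal (∫ θ, |F θ - m| ∂Q) := by
    intro Q hQ m hFi
    have hfm : Measurable fun x => ENNReal.ofReal |T x - m| :=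
      ((hT.sub measurable_const).abs).ennreal_ofReal
    rw [Measure.lintegral_bind hP.aemeasurable hfm.aemeasurable]
    have step1 : ∀ θ, ∫⁻ x, ENNReal.ofReal |T x - m| ∂(P θ)
        ≤ (∫⁻ x, ENNReal.ofReal |T x - F θ| ∂(P θ)) + ENNReal.ofReal |F θ - m| := by
      intro θ
      have hpt : ∀ x, ENNReal.ofReal |T x - m|
          ≤ ENNReal.ofReal |T x - F θ| + ENNReal.ofReal |F θ - m| := by
        intro x
        rw [← ENNReal.ofReal_add (abs_nonneg _) (abs_nonneg _)]
        exact ENNReal.ofReal_le_ofReal (abs_sub_le _ _ _)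
      calc ∫⁻ x, ENNReal.ofReal |T x - m| ∂(P θ)
          ≤ ∫⁻ x, (ENNReal.ofReal |T x - F θ| + ENNReal.ofReal |F θ - m|) ∂(P θ) :=
            lintegral_mono hpt
        _ = (∫⁻ x, ENNReal.ofReal |T x - F θ| ∂(P θ)) + ENNReal.ofReal |F θ - m| := by
            rw [lintegral_add_right _ measurable_const, lintegral_const, measure_univ, mul_one]
    calc ∫⁻ θ, ∫⁻ x, ENNReal.ofReal |T x - m| ∂(P θ) ∂Q
        ≤ ∫⁻ θ, ((∫⁻ x, ENNReal.ofReal |T x - F θ| ∂(P θ)) + ENNReal.ofReal |F θ - m|) ∂Q :=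
          lintegral_mono step1
      _ = (∫⁻ θ, ∫⁻ x, ENNReal.ofReal |T x - F θ| ∂(P θ) ∂Q)
            + ∫⁻ θ, ENNReal.ofReal |F θ - m| ∂Q :=
          lintegral_add_right _ ((hFmeas.sub measurable_const).abs).ennreal_ofReal
      _ ≤ S + ENNReal.ofReal (∫ θ, |F θ - m| ∂Q) := by
          refine add_le_add ?_ ?_
          · calc ∫⁻ θ, ∫⁻ x, ENNReal.ofReal |T x - F θ| ∂(P θ) ∂Q
                ≤ ∫⁻ _θ, S ∂Q := lintegral_mono fun θ =>
                  le_iSup (fun θ' => ∫⁻ x, ENNReal.ofReal |T x - F θ'| ∂(P θ')) θ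
              _ = S := by rw [lintegral_const, measure_univ, mul_one]
          · exact le_of_eq (ofReal_integral_eq_lintegral_ofReal
              ((hFi.sub (integrable_const m)).abs) (ae_of_all _ fun θ => abs_nonneg _)).symm
  have key₀ := key Q₀ m₀ hF₀
  have key₁ := key Q₁ m₁ hF₁
  -- the test set
  set A := {x : 𝒳 | Δ / 2 ≤ |T x - m₀|} with hAdef
  have hA : MeasurableSet A :=
    measurableSet_le measurable_const ((hT.sub measurable_const).abs)
  -- lower bounds
  have low₀ : ENNReal.ofReal (Δ / 2) * p₀ A ≤ ∫⁻ x, ENNReal.ofReal |T x - m₀| ∂p₀ := by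
    calc ENNReal.ofReal (Δ / 2) * p₀ A
        = ∫⁻ _x in A, ENNReal.ofReal (Δ / 2) ∂p₀ := (setLIntegral_const A _).symm
      _ ≤ ∫⁻ x in A, ENNReal.ofReal |T x - m₀| ∂p₀ :=
          setLIntegral_mono ((hT.sub measurable_const).abs).ennreal_ofReal
            fun x hx => ENNReal.ofReal_le_ofReal hx
      _ ≤ ∫⁻ x, ENNReal.ofReal |T x - m₀| ∂p₀ := setLIntegral_le_lintegral _ _
  have low₁ : ENNReal.ofReal (Δ / 2) * p₁ Aᶜ ≤ ∫⁻ x, ENNReal.ofReal |T x - m₁| ∂p₁ := by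
    calc ENNReal.ofReal (Δ / 2) * p₁ Aᶜ
        = ∫⁻ _x in Aᶜ, ENNReal.ofReal (Δ / 2) ∂p₁ := (setLIntegral_const Aᶜ _).symm
      _ ≤ ∫⁻ x in Aᶜ, ENNReal.ofReal |T x - m₁| ∂p₁ := by
          refine setLIntegral_mono ((hT.sub measurable_const).abs).ennreal_ofReal
            fun x hx => ENNReal.ofReal_le_ofReal ?_
          have hx' : ¬ (Δ / 2 ≤ |T x - m₀|) := hx
          push_neg at hx'
          have h1 : |m₀ - m₁| ≤ |m₀ - T x| + |T x - m₁| := abs_sub_le _ _ _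
          have h2 : |m₀ - T x| = |T x - m₀| := abs_sub_comm _ _
          simp only [← hΔdef] at h1
          linarith
      _ ≤ ∫⁻ x, ENNReal.ofReal |T x - m₁| ∂p₁ := setLIntegral_le_lintegral _ _
  -- TV bound
  have hbdd : BddAbove (Set.range fun s : {s : Set 𝒳 // MeasurableSet s} =>
      |(p₀ s).toReal - (p₁ s).toReal|) := by
    refine ⟨1, ?_⟩
    rintro y ⟨s, rfl⟩
    have h0 : (p₀ (s : Set 𝒳)).toReal ≤ 1 := by
      have := prob_le_one (μ := p₀) (s := (s : Set 𝒳))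
      simpa using ENNReal.toReal_mono (by simp) this
    have h1 : (p₁ (s : Set 𝒳)).toReal ≤ 1 := by
      have := prob_le_one (μ := p₁) (s := (s : Set 𝒳))
      simpa using ENNReal.toReal_mono (by simp) this
    have h0' : 0 ≤ (p₀ (s : Set 𝒳)).toReal := ENNReal.toReal_nonneg
    have h1' : 0 ≤ (p₁ (s : Set 𝒳)).toReal := ENNReal.toReal_nonneg
    rw [abs_le]
    constructor <;> linarith
  have htvA : |(p₀ A).toReal - (p₁ A).toReal| ≤ tv :=
    le_ciSup hbdd (⟨A, hA⟩ : {s : Set 𝒳 // MeasurableSet s})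
  have hcompl : (p₁ Aᶜ).toReal = 1 - (p₁ A).toReal := by
    rw [measure_compl hA (measure_ne_top _ _), measure_univ,
      ENNReal.toReal_sub_of_le prob_le_one (by simp)]
    simp
  have h4 : 1 - tv ≤ (p₀ A).toReal + (p₁ Aᶜ).toReal := by
    have h5 : (p₁ A).toReal - (p₀ A).toReal ≤ tv := by
      have := le_abs_self ((p₁ A).toReal - (p₀ A).toReal)
      rw [abs_sub_comm] at this
      linarith
    rw [hcompl]
    linarith
  -- combine in ENNReal
  have h1tvE : ENNReal.ofReal (1 - tv) ≤ p₀ A + p₁ Aᶜ := by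
    calc ENNReal.ofReal (1 - tv)
        ≤ ENNReal.ofReal ((p₀ A).toReal + (p₁ Aᶜ).toReal) := ENNReal.ofReal_le_ofReal h4
      _ = ENNReal.ofReal (p₀ A).toReal + ENNReal.ofReal (p₁ Aᶜ).toReal :=
          ENNReal.ofReal_add ENNReal.toReal_nonneg ENNReal.toReal_nonneg
      _ = p₀ A + p₁ Aᶜ := by
          rw [ENNReal.ofReal_toReal (measure_ne_top _ _), ENNReal.ofReal_toReal (measure_ne_top _ _)]
  have hsum : ENNReal.ofReal (Δ / 2 * (1 - tv))
      ≤ S + S + ENNReal.ofReal (δ₀ + δ₁) := by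
    calc ENNReal.ofReal (Δ / 2 * (1 - tv))
        = ENNReal.ofReal (Δ / 2) * ENNReal.ofReal (1 - tv) :=
          ENNReal.ofReal_mul (by linarith)
      _ ≤ ENNReal.ofReal (Δ / 2) * (p₀ A + p₁ Aᶜ) := by
          exact mul_le_mul_right h1tvE _
      _ = ENNReal.ofReal (Δ / 2) * p₀ A + ENNReal.ofReal (Δ / 2) * p₁ Aᶜ := mul_add _ _ _
      _ ≤ (S + ENNReal.ofReal δ₀) + (S + ENNReal.ofReal δ₁) :=
          add_le_add (low₀.trans key₀) (low₁.trans key₁)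
      _ = S + S + ENNReal.ofReal (δ₀ + δ₁) := by
          rw [ENNReal.ofReal_add hδ₀nn hδ₁nn]; ring
  -- final arithmetic
  have hLrel : Δ / 2 * (1 - tv) = 2 * L + (δ₀ + δ₁) := by
    rw [hLdef]; ring
  rw [hLrel] at hsum
  rw [ENNReal.ofReal_add (by linarith) (by linarith)] at hsum
  have hcancel : ENNReal.ofReal (2 * L) ≤ S + S :=
    (ENNReal.add_le_add_iff_right ENNReal.ofReal_ne_top).mp hsum
  have h2L : ENNReal.ofReal (2 * L) = 2 * ENNReal.ofReal L := by
    rw [ENNReal.ofReal_mul (by norm_num)]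
    norm_num
  rw [h2L, ← two_mul] at hcancel
  exact (ENNReal.mul_le_mul_iff_right (by norm_num) (by norm_num)).mp hcancel
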